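/- Let V and E be finite sets with maps t, h : E → V, let θ : E → ℝ with θ(e) > 0 for all e, and let α > 0. For each e ∈ E let ρ_e : ℝ → ℝ be twice continuously differentiable with ρ_e''(x) = −α²·ρ_e(x) for all x ∈ [0, θ(e)]. Suppose the balancing condition holds at every vertex: for all v ∈ V, Σ_{e : t e = v} ρ_e'(0) − Σ_{e : h e = v} ρ_e'(θ(e)) = 0. Then Σ_{e ∈ E} ∫₀^{θ(e)} ρ_e(x) dx = 0. -/

import Mathlib

open Finset

/-- The average of a balanced homogeneous harmonic function over a ball
centered at the cone vertex vanishes: if `ρₑ'' = -α²ρₑ` on `[0, θ(e)]` for each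
edge `e` and the balancing conditions hold at every vertex, then
`∑_e ∫₀^{θ(e)} ρₑ = 0`. -/
theorem stmt_18 (V E : Type) [Fintype V] [Fintype E] [DecidableEq V]
    (t h : E → V) (θ : E → ℝ) (hθ : ∀ e, 0 < θ e) (α : ℝ) (hα : 0 < α)
    (ρ : E → ℝ → ℝ) (hreg : ∀ e, ContDiff ℝ 2 (ρ e))
    (hode : ∀ e, ∀ x ∈ Set.Icc (0 : ℝ) (θ e),
      deriv (deriv (ρ e)) x = -(α ^ 2) * ρ e x)
    (hbal : ∀ v : V,
      (∑ e ∈ Finset.univ.filter (fun e => t e = v), deriv (ρ e) 0) -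
        (∑ e ∈ Finset.univ.filter (fun e => h e = v), deriv (ρ e) (θ e)) = 0) :
    ∑ e : E, ∫ x in (0 : ℝ)..(θ e), ρ e x = 0 := by
  have key : ∀ e : E, ∫ x in (0 : ℝ)..(θ e), ρ e x =
      -(α ^ 2)⁻¹ * (deriv (ρ e) (θ e) - deriv (ρ e) 0) := by
    intro e
    have hd1 : Differentiable ℝ (deriv (ρ e)) :=
      ((hreg e).iterate_deriv' 1 1).differentiable one_ne_zero
    have hc2 : Continuous (deriv (deriv (ρ e))) :=
      ((hreg e).iterate_deriv' 0 2).continuous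
    have hFTC : ∫ x in (0 : ℝ)..(θ e), deriv (deriv (ρ e)) x =
        deriv (ρ e) (θ e) - deriv (ρ e) 0 :=
      intervalIntegral.integral_deriv_eq_sub (fun x _ => hd1 x)
        (hc2.intervalIntegrable _ _)
    have hcong : ∫ x in (0 : ℝ)..(θ e), deriv (deriv (ρ e)) x =
        ∫ x in (0 : ℝ)..(θ e), -(α ^ 2) * ρ e x := by
      apply intervalIntegral.integral_congr
      intro x hx
      apply hode e
      rwa [Set.uIcc_of_le (hθ e).le] at hx
    rw [hcong, intervalIntegral.integral_const_mul] at hFTC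
    have hα2 : (α : ℝ) ^ 2 ≠ 0 := pow_ne_zero _ hα.ne'
    field_simp at hFTC ⊢
    linarith [hFTC]
  simp only [key]
  rw [← Finset.mul_sum]
  have hsum : ∑ e : E, (deriv (ρ e) (θ e) - deriv (ρ e) 0) = 0 := by
    rw [Finset.sum_sub_distrib]
    have h1 : ∑ e : E, deriv (ρ e) (θ e) =
        ∑ v : V, ∑ e ∈ Finset.univ.filter (fun e => h e = v), deriv (ρ e) (θ e) :=
      (Finset.sum_fiberwise _ _ _).symm
    have h2 : ∑ e : E, deriv (ρ e) 0 =
        ∑ v : V, ∑ e ∈ Finset.univ.filter (fun e => t e = v), deriv (ρ e) 0 :=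
      (Finset.sum_fiberwise _ _ _).symm
    rw [h1, h2, ← Finset.sum_sub_distrib]
    apply Finset.sum_eq_zero
    intro v _
    linarith [hbal v]
  rw [hsum, mul_zero]
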